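/- Let G be a simple graph on a finite vertex set V and let i, j ∈ V be distinct. If f is an (i,j)-feasible flow for G, then i and j are reachable from each other in G, and the value Σ_{k,l∈V} f(k,l) of f is at least dist_G(i,j), the graph distance (length of a shortest path) between i and j in G. -/

import Mathlib

/-- `f : V → V → ℝ` is an `(i,j)`-feasible flow for the simple graph `G`
(a feasible point of the paper's primal shortest-path LP (10)–(14)):
it is nonnegative, vanishes on the diagonal, satisfies the capacity
constraint `f k l + f l k ≤ 1` on edges of `G` and vanishes on non-edges,
and satisfies flow conservation with a unit source at `i` and unit sink
at `j`. -/
def IsFeasibleFlow {V : Type*} [Fintype V] [DecidableEq V]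
    (G : SimpleGraph V) (i j : V) (f : V → V → ℝ) : Prop :=
  (∀ k l, 0 ≤ f k l) ∧
  (∀ k, f k k = 0) ∧
  (∀ k l, G.Adj k l → f k l + f l k ≤ 1) ∧
  (∀ k l, k ≠ l → ¬ G.Adj k l → f k l = 0) ∧
  (∀ k, (∑ l, f k l) - (∑ l, f l k) =
    if k = i then 1 else if k = j then -1 else 0)

/-- **Lower-bound half of the correctness of the primal shortest-path LP.**
If `f` is an `(i,j)`-feasible flow for `G` (with `i ≠ j`), then `i` and `j`
are reachable from each other in `G` and the value `∑_{k,l} f k l` of the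
flow is at least the graph distance `dist_G(i,j)`. -/
theorem feasibleFlow_value_ge_dist {V : Type*} [Fintype V] [DecidableEq V]
    (G : SimpleGraph V) (i j : V) (hij : i ≠ j) (f : V → V → ℝ)
    (hf : IsFeasibleFlow G i j f) :
    G.Reachable i j ∧ (G.dist i j : ℝ) ≤ ∑ k, ∑ l, f k l := by
  classical
  obtain ⟨hnn, hdiag, hcap, hne, hcons⟩ := hf
  -- Duality lemma: for any potential `y` with `y l - y k ≤ 1` on edges,
  -- the value of the flow is at least `y j - y i`.
  have key : ∀ y : V → ℝ, (∀ k l, G.Adj k l → y l - y k ≤ 1) →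
      y j - y i ≤ ∑ k, ∑ l, f k l := by
    intro y hy
    have h1 : ∑ k, ∑ l, f k l * (y l - y k) = y j - y i := by
      calc ∑ k, ∑ l, f k l * (y l - y k)
          = ∑ k, ((∑ l, f k l * y l) - (∑ l, f k l) * y k) := by
            apply Finset.sum_congr rfl; intro k _
            rw [Finset.sum_mul]
            rw [← Finset.sum_sub_distrib]
            apply Finset.sum_congr rfl; intro l _; ring
        _ = (∑ k, ∑ l, f k l * y l) - ∑ k, (∑ l, f k l) * y k :=
            Finset.sum_sub_distrib _ _
        _ = (∑ k, (∑ l, f l k) * y k) - ∑ k, (∑ l, f k l) * y k := by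
            rw [Finset.sum_comm]
            congr 1
            apply Finset.sum_congr rfl; intro k _
            rw [Finset.sum_mul]
        _ = ∑ k, ((∑ l, f l k) - (∑ l, f k l)) * y k := by
            rw [← Finset.sum_sub_distrib]
            apply Finset.sum_congr rfl; intro k _; ring
        _ = ∑ k, ((if k = j then y k else 0) - (if k = i then y k else 0)) := by
            apply Finset.sum_congr rfl; intro k _
            have := hcons k
            have h' : (∑ l, f l k) - (∑ l, f k l)
                = -(if k = i then (1:ℝ) else if k = j then -1 else 0) := by
              rw [← this]; ring
            rw [h']
            by_cases hki : k = i
            · subst hki; simp [hij]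
            · by_cases hkj : k = j
              · subst hkj; simp [hki]
              · simp [hki, hkj]
        _ = y j - y i := by
            rw [Finset.sum_sub_distrib, Finset.sum_ite_eq' Finset.univ j y,
              Finset.sum_ite_eq' Finset.univ i y]
            simp
    rw [← h1]
    apply Finset.sum_le_sum
    intro k _
    apply Finset.sum_le_sum
    intro l _
    by_cases hadj : G.Adj k l
    · calc f k l * (y l - y k) ≤ f k l * 1 :=
            mul_le_mul_of_nonneg_left (hy k l hadj) (hnn k l)
        _ = f k l := mul_one _
    · by_cases hkl : k = l
      · subst hkl; rw [hdiag]; simp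
      · rw [hne k l hkl hadj]; simp
  -- Reachability.
  have hreach : G.Reachable i j := by
    by_contra hnr
    set S := ∑ k, ∑ l, f k l with hS
    have := key (fun k => if G.Reachable i k then 0 else S + 1) ?_
    · simp only [if_pos (SimpleGraph.Reachable.refl i), if_neg hnr, sub_zero] at this
      linarith
    · intro k l hadj
      beta_reduce
      by_cases hk : G.Reachable i k
      · rw [if_pos hk, if_pos (hk.trans hadj.reachable), sub_zero]; norm_num
      · have hl : ¬ G.Reachable i l := fun h => hk (h.trans hadj.symm.reachable)
        rw [if_neg hk, if_neg hl]; norm_num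
  refine ⟨hreach, ?_⟩
  -- Distance bound via the truncated-distance potential.
  have hb := key (fun k => if G.Reachable i k then
      (min (G.dist i k) (G.dist i j) : ℝ) else (G.dist i j : ℝ)) ?_
  · simp only [if_pos hreach, if_pos (SimpleGraph.Reachable.refl i),
      SimpleGraph.dist_self, min_self] at hb
    simpa using hb
  · intro k l hadj
    beta_reduce
    by_cases hk : G.Reachable i k
    · have hl : G.Reachable i l := hk.trans hadj.reachable
      rw [if_pos hk, if_pos hl]
      have hd : G.dist i l ≤ G.dist i k + 1 := by
        obtain ⟨p, hp⟩ := hk.exists_walk_length_eq_dist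
        have := G.dist_le (p.concat hadj)
        rwa [SimpleGraph.Walk.length_concat, hp] at this
      have : min (G.dist i l) (G.dist i j) ≤ min (G.dist i k) (G.dist i j) + 1 := by
        omega
      have := (Nat.cast_le (α := ℝ)).mpr this
      push_cast at this ⊢
      linarith
    · have hl : ¬ G.Reachable i l := fun h => hk (h.trans hadj.symm.reachable)
      rw [if_neg hk, if_neg hl]; norm_num
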